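/- Let V be an n-dimensional vector space over F_q with basis {v_1, ..., v_n}, let V' = span{v_2, ..., v_n}, and let F be the family of all 2-dimensional subspaces of the form span{v_1, w} where w ranges over nonzero vectors of V' (one subspace per 1-dimensional subspace of V'). Then |F| = [n-1]_q = (q^(n-1) - 1)/(q - 1), and F is a fractional {1/2}-intersecting family: any two distinct members intersect in a subspace of dimension exactly 1 = (1/2)·2. -/

import Mathlib

/-- The q-integer `[m]_q = 1 + q + ⋯ + q^(m-1)`, the number of 1-dimensional
subspaces of an `m`-dimensional space over `F_q`. -/
def qint (q m : ℕ) : ℕ := ∑ i ∈ Finset.range m, q ^ i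

lemma qint_mul (q m : ℕ) (hq : 1 ≤ q) : qint q m * (q - 1) = q ^ m - 1 := by
  have h1 : 1 ≤ q ^ m := Nat.one_le_pow _ _ hq
  have h := geom_sum_mul (q : ℤ) m
  have : ((qint q m * (q - 1) : ℕ) : ℤ) = ((q ^ m - 1 : ℕ) : ℤ) := by
    push_cast [qint, Nat.cast_sub hq, Nat.cast_sub h1]
    simpa using h
  exact_mod_cast this

lemma span_gen {K M : Type*} [Field K] [AddCommGroup M] [Module K M]
    {X : Submodule K M} (hX : Module.finrank K X = 1) :
    ∃ x : M, x ≠ 0 ∧ X = Submodule.span K {x} := by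
  obtain ⟨v, hv0, hv⟩ := finrank_eq_one_iff'.mp hX
  refine ⟨(v : M), by simpa using hv0, le_antisymm ?_ ?_⟩
  · intro w hw
    obtain ⟨c, hc⟩ := hv ⟨w, hw⟩
    exact Submodule.mem_span_singleton.mpr ⟨c, by
      simpa using congrArg (Subtype.val) hc⟩
  · rw [Submodule.span_singleton_le_iff_mem]; exact v.2

lemma card_lines {K M : Type*} [Field K] [Fintype K] [AddCommGroup M] [Module K M]
    [FiniteDimensional K M] :
    Nat.card {X : Submodule K M // Module.finrank K ↥X = 1}
      = qint (Fintype.card K) (Module.finrank K M) := by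
  classical
  have hfin : Finite M := Module.finite_of_finite K
  let _ : Fintype M := Fintype.ofFinite M
  set q := Fintype.card K with hq
  have hq2 : 2 ≤ q := Fintype.one_lt_card
  have hgen : ∀ X : {X : Submodule K M // Module.finrank K ↥X = 1},
      ∃ x : M, x ≠ 0 ∧ (X : Submodule K M) = Submodule.span K {x} := fun X => span_gen X.2
  choose g hg0 hgs using hgen
  let F : {X : Submodule K M // Module.finrank K ↥X = 1} × Kˣ → {x : M // x ≠ 0} :=
    fun p => ⟨(p.2 : K) • g p.1, smul_ne_zero (Units.ne_zero _) (hg0 p.1)⟩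
  have hFb : Function.Bijective F := by
    constructor
    · rintro ⟨X, c⟩ ⟨Y, d⟩ h
      simp only [F, Subtype.mk.injEq] at h
      have hXY : X = Y := by
        apply Subtype.ext
        rw [hgs X, hgs Y, ← Submodule.span_singleton_smul_eq (c.isUnit) (g X),
          ← Submodule.span_singleton_smul_eq (d.isUnit) (g Y), h]
      subst hXY
      have hc : (c : K) = (d : K) := smul_left_injective K (hg0 X) h
      exact Prod.ext rfl (Units.ext hc)
    · rintro ⟨x, hx⟩
      have hfr : Module.finrank K ↥(Submodule.span K {x}) = 1 := finrank_span_singleton hx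
      set X : {X : Submodule K M // Module.finrank K ↥X = 1} :=
        ⟨Submodule.span K {x}, hfr⟩ with hXdef
      have hxX : x ∈ (X : Submodule K M) := Submodule.mem_span_singleton_self x
      rw [hgs X] at hxX
      obtain ⟨c, hc⟩ := Submodule.mem_span_singleton.mp hxX
      have hc0 : c ≠ 0 := by rintro rfl; rw [zero_smul] at hc; exact hx hc.symm
      exact ⟨⟨X, Units.mk0 c hc0⟩, Subtype.ext hc⟩
  have hcard := Nat.card_eq_of_bijective F hFb
  rw [Nat.card_prod] at hcard
  have h2 : Nat.card Kˣ = q - 1 := by rw [Nat.card_units, Nat.card_eq_fintype_card]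
  have h1 : Nat.card {x : M // x ≠ 0} = q ^ Module.finrank K M - 1 := by
    rw [Nat.card_eq_fintype_card, Fintype.card_subtype_compl (· = (0 : M)),
      Fintype.card_subtype_eq (0 : M), Module.card_eq_pow_finrank (K := K)]
  rw [h1, h2] at hcard
  have hqm := qint_mul q (Module.finrank K M) (by omega)
  exact Nat.eq_of_mul_eq_mul_right (by omega) (hcard.trans hqm.symm)

theorem bisection_closed_example
    {𝔽 V : Type*} [Field 𝔽] [Fintype 𝔽]
    [AddCommGroup V] [Module 𝔽 V] [FiniteDimensional 𝔽 V]
    (q n : ℕ) (hq : Fintype.card 𝔽 = q) (hnn : Module.finrank 𝔽 V = n)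
    (hn : 0 < n) (v : Module.Basis (Fin n) 𝔽 V) :
    let V' : Submodule 𝔽 V := Submodule.span 𝔽 (⇑v '' {i | i ≠ ⟨0, hn⟩})
    let 𝓕 : Set (Submodule 𝔽 V) :=
      {W | ∃ X : Submodule 𝔽 V, X ≤ V' ∧ Module.finrank 𝔽 X = 1 ∧
        W = X ⊔ Submodule.span 𝔽 {v ⟨0, hn⟩}}
    (∀ W ∈ 𝓕, Module.finrank 𝔽 W = 2)
    ∧ 𝓕.ncard = qint q (n - 1)
    ∧ ∀ U ∈ 𝓕, ∀ W ∈ 𝓕, U ≠ W →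
        2 * Module.finrank 𝔽 ↥(U ⊓ W) = Module.finrank 𝔽 U
        ∧ Module.finrank 𝔽 ↥(U ⊓ W) = 1 := by
  classical
  intro V' 𝓕
  set i0 : Fin n := ⟨0, hn⟩ with hi0
  set S : Submodule 𝔽 V := Submodule.span 𝔽 {v i0} with hS
  have hS1 : Module.finrank 𝔽 S = 1 := finrank_span_singleton (v.ne_zero i0)
  have hv0 : v i0 ∉ V' := v.linearIndependent.notMem_span_image (by simp [hi0])
  -- dimension 2
  have hdim2 : ∀ W ∈ 𝓕, Module.finrank 𝔽 W = 2 := by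
    rintro W ⟨X, hXle, hX1, rfl⟩
    have hinf : X ⊓ S = ⊥ := by
      rw [eq_bot_iff]
      rintro x ⟨hxX, hxS⟩
      obtain ⟨c, rfl⟩ := Submodule.mem_span_singleton.mp hxS
      rcases eq_or_ne c 0 with rfl | hc
      · simp
      · exact absurd ((Submodule.smul_mem_iff V' hc).mp (hXle hxX)) hv0
    have hsum := Submodule.finrank_sup_add_finrank_inf_eq X S
    rw [hinf, finrank_bot, hX1, hS1] at hsum
    show Module.finrank 𝔽 ↥(X ⊔ S) = 2
    omega
  refine ⟨hdim2, ?_, ?_⟩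
  · -- cardinality
    have hrec : ∀ X : Submodule 𝔽 V, X ≤ V' → (X ⊔ S) ⊓ V' = X := by
      intro X hXle
      apply le_antisymm
      · rintro w ⟨hw1, hw2⟩
        obtain ⟨x, hx, y, hy, rfl⟩ := Submodule.mem_sup.mp hw1
        obtain ⟨c, rfl⟩ := Submodule.mem_span_singleton.mp hy
        rcases eq_or_ne c 0 with rfl | hc
        · simpa using hx
        · exfalso
          apply hv0
          have hmem : c • v i0 ∈ V' := by
            have := V'.sub_mem hw2 (hXle hx)
            simpa using this
          exact (Submodule.smul_mem_iff V' hc).mp hmem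
      · exact le_inf le_sup_left hXle
    have h𝓕 : 𝓕 = (fun X => X ⊔ S) ''
        {X : Submodule 𝔽 V | X ≤ V' ∧ Module.finrank 𝔽 X = 1} := by
      ext W
      simp only [𝓕, Set.mem_setOf_eq, Set.mem_image]
      constructor
      · rintro ⟨X, h1, h2, h3⟩; exact ⟨X, ⟨h1, h2⟩, h3.symm⟩
      · rintro ⟨X, ⟨h1, h2⟩, h3⟩; exact ⟨X, h1, h2, h3.symm⟩
    have hinj : Set.InjOn (fun X => X ⊔ S)
        {X : Submodule 𝔽 V | X ≤ V' ∧ Module.finrank 𝔽 X = 1} := by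
      rintro X ⟨hX, _⟩ Y ⟨hY, _⟩ h
      have h' : X ⊔ S = Y ⊔ S := h
      calc X = (X ⊔ S) ⊓ V' := (hrec X hX).symm
        _ = (Y ⊔ S) ⊓ V' := by rw [h']
        _ = Y := hrec Y hY
    rw [h𝓕, Set.ncard_image_of_injOn hinj, ← Nat.card_coe_set_eq]
    -- identify with lines in V'
    have e : {Y : Submodule 𝔽 ↥V' // Module.finrank 𝔽 ↥Y = 1} ≃
        {X : Submodule 𝔽 V // X ≤ V' ∧ Module.finrank 𝔽 ↥X = 1} :=
      { toFun := fun Y => ⟨Y.1.map V'.subtype, Submodule.map_subtype_le V' Y.1,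
          by rw [Submodule.finrank_map_subtype_eq]; exact Y.2⟩
        invFun := fun X => ⟨X.1.comap V'.subtype, by
          have hmap : (X.1.comap V'.subtype).map V'.subtype = X.1 := by
            rw [Submodule.map_comap_subtype, inf_eq_right.mpr X.2.1]
          have := Submodule.finrank_map_subtype_eq V' (X.1.comap V'.subtype)
          rw [hmap] at this
          rw [← this]; exact X.2.2⟩
        left_inv := fun Y => Subtype.ext
          (Submodule.comap_map_eq_of_injective V'.injective_subtype Y.1)
        right_inv := fun X => Subtype.ext (by
          simp only [Submodule.map_comap_subtype]
          exact inf_eq_right.mpr X.2.1) }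
    have hcardeq : Nat.card {X : Submodule 𝔽 V // X ≤ V' ∧ Module.finrank 𝔽 ↥X = 1}
        = Nat.card {Y : Submodule 𝔽 ↥V' // Module.finrank 𝔽 ↥Y = 1} :=
      (Nat.card_congr e).symm
    have hV' : Module.finrank 𝔽 ↥V' = n - 1 := by
      have hli : LinearIndependent 𝔽 (fun i : {i : Fin n // i ≠ i0} => v (i : Fin n)) :=
        v.linearIndependent.comp _ Subtype.val_injective
      have himg : (⇑v '' {i | i ≠ i0}) =
          Set.range (fun i : {i : Fin n // i ≠ i0} => v (i : Fin n)) := by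
        rw [Set.image_eq_range]; rfl
      have : Module.finrank 𝔽 ↥V' = Fintype.card {i : Fin n // i ≠ i0} := by
        show Module.finrank 𝔽 ↥(Submodule.span 𝔽 (⇑v '' {i | i ≠ i0})) = _
        rw [himg, finrank_span_eq_card hli]
      rw [this, Fintype.card_subtype_compl (· = i0), Fintype.card_subtype_eq i0,
        Fintype.card_fin]
    have hmem_eq : {X : Submodule 𝔽 V | X ≤ V' ∧ Module.finrank 𝔽 X = 1} =
        Set.range (Subtype.val :
          {X : Submodule 𝔽 V // X ≤ V' ∧ Module.finrank 𝔽 ↥X = 1} → _) := by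
      rw [Subtype.range_coe_subtype]
    calc Nat.card ↥{X : Submodule 𝔽 V | X ≤ V' ∧ Module.finrank 𝔽 X = 1}
        = Nat.card {X : Submodule 𝔽 V // X ≤ V' ∧ Module.finrank 𝔽 ↥X = 1} := rfl
      _ = Nat.card {Y : Submodule 𝔽 ↥V' // Module.finrank 𝔽 ↥Y = 1} := hcardeq
      _ = qint (Fintype.card 𝔽) (Module.finrank 𝔽 ↥V') := card_lines
      _ = qint q (n - 1) := by rw [hq, hV']
  · -- intersection
    rintro U hU W hW hne
    obtain ⟨X, hXle, hX1, rfl⟩ := hU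
    obtain ⟨Y, hYle, hY1, rfl⟩ := hW
    have hUdim : Module.finrank 𝔽 ↥(X ⊔ S) = 2 := hdim2 _ ⟨X, hXle, hX1, rfl⟩
    have hWdim : Module.finrank 𝔽 ↥(Y ⊔ S) = 2 := hdim2 _ ⟨Y, hYle, hY1, rfl⟩
    have hle : S ≤ (X ⊔ S) ⊓ (Y ⊔ S) := le_inf le_sup_right le_sup_right
    have h1 : 1 ≤ Module.finrank 𝔽 ↥((X ⊔ S) ⊓ (Y ⊔ S)) :=
      hS1 ▸ Submodule.finrank_mono hle
    have h2 : Module.finrank 𝔽 ↥((X ⊔ S) ⊓ (Y ⊔ S)) ≤ 2 :=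
      hUdim ▸ Submodule.finrank_mono inf_le_left
    have hne2 : Module.finrank 𝔽 ↥((X ⊔ S) ⊓ (Y ⊔ S)) ≠ 2 := by
      intro h
      have e1 : (X ⊔ S) ⊓ (Y ⊔ S) = X ⊔ S :=
        Submodule.eq_of_le_of_finrank_eq inf_le_left (h.trans hUdim.symm)
      have e2 : (X ⊔ S) ⊓ (Y ⊔ S) = Y ⊔ S :=
        Submodule.eq_of_le_of_finrank_eq inf_le_right (h.trans hWdim.symm)
      exact hne (e1.symm.trans e2)
    have hfr : Module.finrank 𝔽 ↥((X ⊔ S) ⊓ (Y ⊔ S)) = 1 := by omega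
    exact ⟨by rw [hfr, hUdim], hfr⟩
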